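/- Let H ∈ ℂ^{M×K}, let Σ_s ∈ ℂ^{K×K} and Σ_n ∈ ℂ^{M×M} be Hermitian positive definite, and let W ∈ ℂ^{K×K} be Hermitian positive definite. Define E(G) = (I_K − GᴴH)Σ_s(I_K − GᴴH)ᴴ + GᴴΣ_nG for G ∈ ℂ^{M×K}. Then G⋆ = (HΣ_sHᴴ + Σ_n)⁻¹HΣ_s satisfies Re(Tr(W·E(G⋆))) ≤ Re(Tr(W·E(G))) for every G ∈ ℂ^{M×K}; i.e., the generalized Wiener filter G⋆ globally minimizes G ↦ Re(Tr(W·E(G))). -/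

import Mathlib

open Matrix ComplexOrder

/-- The weighted-MSE matrix E(G) = (I − Gᴴ H) Σ_s (I − Gᴴ H)ᴴ + Gᴴ Σ_n G. -/
noncomputable def mseMatrix {M K : ℕ} (H : Matrix (Fin M) (Fin K) ℂ)
    (Ss : Matrix (Fin K) (Fin K) ℂ) (Sn : Matrix (Fin M) (Fin M) ℂ)
    (G : Matrix (Fin M) (Fin K) ℂ) : Matrix (Fin K) (Fin K) ℂ :=
  (1 - Gᴴ * H) * Ss * (1 - Gᴴ * H)ᴴ + Gᴴ * Sn * G

lemma trace_nonneg_of_posSemidef {n : ℕ} {P : Matrix (Fin n) (Fin n) ℂ}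
    (hP : P.PosSemidef) : 0 ≤ P.trace := by
  rw [Matrix.trace]
  apply Finset.sum_nonneg
  intro i _
  have := hP.dotProduct_mulVec_nonneg (Pi.single i 1)
  simpa [Matrix.mulVec, dotProduct, Pi.single_apply] using this

open scoped MatrixOrder in
lemma trace_mul_posSemidef_nonneg {n : ℕ} {W P : Matrix (Fin n) (Fin n) ℂ}
    (hW : W.PosSemidef) (hP : P.PosSemidef) : 0 ≤ (W * P).trace := by
  have hs : (CFC.sqrt W).PosSemidef := (CFC.sqrt_nonneg W).posSemidef
  have h1 : W * P = CFC.sqrt W * (CFC.sqrt W * P) := by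
    rw [← Matrix.mul_assoc, CFC.sqrt_mul_sqrt_self W hW.nonneg]
  rw [h1, Matrix.trace_mul_comm]
  have hps : (CFC.sqrt W * P * CFC.sqrt W).PosSemidef := by
    have h2 : CFC.sqrt W * P * CFC.sqrt W = CFC.sqrt W * P * (CFC.sqrt W)ᴴ := by rw [hs.1.eq]
    rw [h2]; exact hP.mul_mul_conjTranspose_same (CFC.sqrt W)
  exact trace_nonneg_of_posSemidef hps

lemma mse_decomp {M K : ℕ} (H : Matrix (Fin M) (Fin K) ℂ)
    (Ss : Matrix (Fin K) (Fin K) ℂ) (Sn : Matrix (Fin M) (Fin M) ℂ)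
    (R : Matrix (Fin M) (Fin M) ℂ) (Gs G : Matrix (Fin M) (Fin K) ℂ)
    (hRdef : R = H * Ss * Hᴴ + Sn)
    (hSsH : Ssᴴ = Ss) (hRH : Rᴴ = R)
    (h1 : R * Gs = H * Ss) :
    mseMatrix H Ss Sn G = mseMatrix H Ss Sn Gs + (G - Gs)ᴴ * R * (G - Gs) := by
  have h2 : Ss * Hᴴ = Gsᴴ * R := by
    have := congrArg Matrix.conjTranspose h1
    simp only [Matrix.conjTranspose_mul, hSsH, hRH] at this
    exact this.symm
  have h2x : ∀ X : Matrix (Fin M) (Fin K) ℂ,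
      Ss * (Hᴴ * X) = Gsᴴ * (R * X) := by
    intro X
    rw [← Matrix.mul_assoc, h2, Matrix.mul_assoc]
  have e1 : ∀ X : Matrix (Fin M) (Fin K) ℂ,
      mseMatrix H Ss Sn X = Ss - Ss * (Hᴴ * X) - Xᴴ * (H * Ss) + Xᴴ * (R * X) := by
    intro X
    simp only [mseMatrix, hRdef, Matrix.conjTranspose_sub, Matrix.conjTranspose_mul,
      Matrix.conjTranspose_one, Matrix.conjTranspose_conjTranspose, hSsH]
    simp only [Matrix.mul_sub, Matrix.sub_mul, Matrix.mul_add, Matrix.add_mul,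
      Matrix.mul_one, Matrix.one_mul, Matrix.mul_assoc]
    abel
  rw [e1, e1, show H * Ss = R * Gs from h1.symm, h2x G, h2x Gs]
  simp only [Matrix.conjTranspose_sub, Matrix.mul_sub, Matrix.sub_mul, Matrix.mul_assoc]
  abel

/-- Generalized Wiener filter: for Hermitian positive definite Σ_s, Σ_n and
Hermitian positive definite weight W, the matrix G⋆ = (HΣ_sHᴴ + Σ_n)⁻¹HΣ_s globally
minimizes G ↦ Re(Tr(W·E(G))) over all G ∈ ℂ^{M×K}. -/
theorem wiener_filter_optimal {M K : ℕ} (H : Matrix (Fin M) (Fin K) ℂ)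
    (Ss : Matrix (Fin K) (Fin K) ℂ) (hSs : Ss.PosDef)
    (Sn : Matrix (Fin M) (Fin M) ℂ) (hSn : Sn.PosDef)
    (W : Matrix (Fin K) (Fin K) ℂ) (hW : W.PosDef) :
    ∀ G : Matrix (Fin M) (Fin K) ℂ,
      ((W * mseMatrix H Ss Sn ((H * Ss * Hᴴ + Sn)⁻¹ * H * Ss)).trace).re
        ≤ ((W * mseMatrix H Ss Sn G).trace).re := by
  intro G
  have hR : (H * Ss * Hᴴ + Sn).PosDef :=
    Matrix.PosDef.posSemidef_add (hSs.posSemidef.mul_mul_conjTranspose_same H) hSn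
  have hRdet : IsUnit (H * Ss * Hᴴ + Sn).det :=
    (Matrix.isUnit_iff_isUnit_det _).mp hR.isUnit
  have h1 : (H * Ss * Hᴴ + Sn) * ((H * Ss * Hᴴ + Sn)⁻¹ * H * Ss) = H * Ss := by
    rw [Matrix.mul_assoc _ H Ss, Matrix.mul_nonsing_inv_cancel_left _ _ hRdet]
  have key := mse_decomp H Ss Sn (H * Ss * Hᴴ + Sn) ((H * Ss * Hᴴ + Sn)⁻¹ * H * Ss) G
    rfl hSs.isHermitian.eq hR.isHermitian.eq h1
  have hP : ((G - (H * Ss * Hᴴ + Sn)⁻¹ * H * Ss)ᴴ * (H * Ss * Hᴴ + Sn) *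
      (G - (H * Ss * Hᴴ + Sn)⁻¹ * H * Ss)).PosSemidef :=
    hR.posSemidef.conjTranspose_mul_mul_same _
  have hnn := trace_mul_posSemidef_nonneg hW.posSemidef hP
  rw [key, Matrix.mul_add, Matrix.trace_add, Complex.add_re]
  have hre : 0 ≤ ((W * ((G - (H * Ss * Hᴴ + Sn)⁻¹ * H * Ss)ᴴ * (H * Ss * Hᴴ + Sn) *
      (G - (H * Ss * Hᴴ + Sn)⁻¹ * H * Ss))).trace).re := by
    rw [Complex.le_def] at hnn
    simpa using hnn.1
  linarith
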